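/- Let Ā ∈ ℝ^{5×5} be the matrix with Ā₁₂ = 1, Ā₂,₃:₅ = gᵀ for some fixed g ∈ ℝ³ and zeros elsewhere, and let C̄ = [[−𝟙_p, 0_p, rᵀ], [0, 0, ξᵀ]] ∈ ℝ^{(p+1)×5} where r ∈ ℝ^{p×3} has rows r₁ᵀ,…,r_pᵀ and ξ = (r₁−r₂)×(r₁−r₃). If r₁, r₂, r₃ are not collinear (i.e., r₁−r₂ and r₁−r₃ are linearly independent), then the observability matrix [C̄; C̄Ā; C̄Ā²] has rank 5, i.e., the pair (Ā, C̄) is Kalman observable. -/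

import Mathlib

open Matrix
open scoped Matrix

/-- The matrix `Ā = [[0, 1, 0₁ₓ₃], [0, 0, gᵀ], [0₃ₓ₁, 0₃ₓ₁, 0₃ₓ₃]]`. -/
def Abar (g : Fin 3 → ℝ) : Matrix (Fin 5) (Fin 5) ℝ :=
  Matrix.of fun i j =>
    if i.val = 0 ∧ j.val = 1 then 1
    else if h : i.val = 1 ∧ 2 ≤ j.val then g ⟨j.val - 2, by omega⟩
    else 0

/-- `C̄ = [[−𝟙_p, 0_p, rᵀ], [0, 0, ξᵀ]]`: rows `i < p` are `[−1, 0, rᵢᵀ]` and the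
last row is `[0, 0, ξᵀ]`. -/
def Cbar (p : ℕ) (r : Fin p → Fin 3 → ℝ) (ξ : Fin 3 → ℝ) :
    Matrix (Fin (p + 1)) (Fin 5) ℝ :=
  Matrix.of fun i j =>
    if hi : i.val < p then
      if j.val = 0 then -1
      else if hj : 2 ≤ j.val then r ⟨i.val, hi⟩ ⟨j.val - 2, by omega⟩
      else 0
    else
      if hj : 2 ≤ j.val then ξ ⟨j.val - 2, by omega⟩ else 0

/-- Auxiliary: if `x` is orthogonal to `u`, `v` and `u ⨯₃ v` with `u, v`
linearly independent, then `x = 0`. -/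
lemma aux3_stereo (u v x : Fin 3 → ℝ)
    (hind : LinearIndependent ℝ ![u, v])
    (hu : u 0 * x 0 + u 1 * x 1 + u 2 * x 2 = 0)
    (hv : v 0 * x 0 + v 1 * x 1 + v 2 * x 2 = 0)
    (hw : (u ⨯₃ v) 0 * x 0 + (u ⨯₃ v) 1 * x 1 + (u ⨯₃ v) 2 * x 2 = 0) :
    x = 0 := by
  have hwne : u ⨯₃ v ≠ 0 := crossProduct_ne_zero_iff_linearIndependent.mpr hind
  set w := u ⨯₃ v with hwdef
  have hwc : w = ![u 1 * v 2 - u 2 * v 1, u 2 * v 0 - u 0 * v 2, u 0 * v 1 - u 1 * v 0] :=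
    cross_apply u v
  set M : Matrix (Fin 3) (Fin 3) ℝ := Matrix.of ![u, v, w] with hM
  have hdet : M.det = w 0 ^ 2 + w 1 ^ 2 + w 2 ^ 2 := by
    rw [Matrix.det_fin_three]
    simp only [hM, Matrix.of_apply, Matrix.cons_val', Matrix.cons_val_zero, Matrix.cons_val_one,
      Matrix.head_cons, Matrix.empty_val', Matrix.cons_val_fin_one, Matrix.head_fin_const,
      Matrix.cons_val_two, Matrix.tail_cons]
    rw [hwc]
    simp [Matrix.cons_val_zero, Matrix.cons_val_one]
    ring
  have hdne : M.det ≠ 0 := by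
    rw [hdet]
    intro h
    apply hwne
    have h0 : w 0 = 0 := by nlinarith [sq_nonneg (w 0), sq_nonneg (w 1), sq_nonneg (w 2)]
    have h1 : w 1 = 0 := by nlinarith [sq_nonneg (w 0), sq_nonneg (w 1), sq_nonneg (w 2)]
    have h2 : w 2 = 0 := by nlinarith [sq_nonneg (w 0), sq_nonneg (w 1), sq_nonneg (w 2)]
    funext i; fin_cases i <;> simpa using ‹_›
  have hmv : M.mulVec x = 0 := by
    funext i
    fin_cases i <;>
      simp [hM, Matrix.mulVec, dotProduct, Fin.sum_univ_three] <;> linarith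
  exact Matrix.eq_zero_of_mulVec_eq_zero hdne hmv

/-- If `r₁, r₂, r₃` are not collinear, then the observability matrix
`[C̄; C̄Ā; C̄Ā²]` has rank 5, i.e., `(Ā, C̄)` is Kalman observable. -/
theorem stereo_INS_Kalman_observable (p : ℕ) (hp : 3 ≤ p)
    (g : Fin 3 → ℝ) (r : Fin p → Fin 3 → ℝ) (ξ : Fin 3 → ℝ)
    (hξ : ξ = (r ⟨0, by omega⟩ - r ⟨1, by omega⟩) ⨯₃ (r ⟨0, by omega⟩ - r ⟨2, by omega⟩))
    (hind : LinearIndependent ℝ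
      ![r ⟨0, by omega⟩ - r ⟨1, by omega⟩, r ⟨0, by omega⟩ - r ⟨2, by omega⟩])
    (O : Matrix (Fin 3 × Fin (p + 1)) (Fin 5) ℝ)
    (hO : O = Matrix.of fun q j => (Cbar p r ξ * Abar g ^ (q.1 : ℕ)) q.2 j) :
    O.rank = 5 := by
  have hker : ∀ x : Fin 5 → ℝ, O *ᵥ x = 0 → x = 0 := by
    intro x hx
    have E : ∀ (q : Fin 3) (i : Fin (p+1)),
        ∑ j : Fin 5, (Cbar p r ξ * Abar g ^ (q:ℕ)) i j * x j = 0 := by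
      intro q i
      simpa [hO, Matrix.mulVec, dotProduct] using congrFun hx (q,i)
    have key : ∀ (i : Fin (p+1)), ∑ j : Fin 5, Cbar p r ξ i j * x j = 0 := by
      intro i
      simpa using E 0 i
    have e00 := key ⟨0, by omega⟩
    have e01 := key ⟨1, by omega⟩
    have e02 := key ⟨2, by omega⟩
    have e0p := key ⟨p, by omega⟩
    have e10 := E 1 ⟨0, by omega⟩
    simp (config := { decide := true }) only [Fin.sum_univ_five, Cbar, Abar, Matrix.of_apply,
      Matrix.mul_apply, pow_one, Fin.val_zero, Fin.val_one,
      show (0 < p) from by omega, show (1 < p) from by omega, show (2 < p) from by omega,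
      show ¬ (p < p) from by omega, dif_pos, dif_neg, if_true, if_false, dite_true,
      dite_false] at e00 e01 e02 e0p e10
    norm_num [show ((3:Fin 5):ℕ) = 3 from rfl, show ((4:Fin 5):ℕ) = 4 from rfl,
      show (⟨1, by omega⟩ : Fin 3) = 1 from rfl,
      show (⟨2, by omega⟩ : Fin 3) = 2 from rfl] at e00 e01 e02 e0p e10
    set u := r ⟨0, by omega⟩ - r ⟨1, by omega⟩ with hu
    set v := r ⟨0, by omega⟩ - r ⟨2, by omega⟩ with hv
    set y : Fin 3 → ℝ := ![x 2, x 3, x 4] with hy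
    have hy0 : y = 0 := by
      apply aux3_stereo u v y hind
      · simp only [hu, hy, Pi.sub_apply, Matrix.cons_val_zero, Matrix.cons_val_one,
          Matrix.head_cons, Matrix.cons_val_two, Matrix.tail_cons]
        linarith
      · simp only [hv, hy, Pi.sub_apply, Matrix.cons_val_zero, Matrix.cons_val_one,
          Matrix.head_cons, Matrix.cons_val_two, Matrix.tail_cons]
        linarith
      · rw [← hξ]
        simp only [hy, Matrix.cons_val_zero, Matrix.cons_val_one, Matrix.head_cons,
          Matrix.cons_val_two, Matrix.tail_cons]
        linarith
    have hx2 : x 2 = 0 := by simpa [hy] using congrFun hy0 0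
    have hx3 : x 3 = 0 := by simpa [hy] using congrFun hy0 1
    have hx4 : x 4 = 0 := by simpa [hy] using congrFun hy0 2
    have hx0 : x 0 = 0 := by rw [hx2, hx3, hx4] at e00; linarith
    funext j
    fin_cases j <;> simpa using ‹_›
  have hinj : Function.Injective O.mulVecLin := by
    rw [← LinearMap.ker_eq_bot, LinearMap.ker_eq_bot']
    intro x hx
    exact hker x hx
  rw [Matrix.rank, LinearMap.finrank_range_of_inj hinj]
  simp
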